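/- Let c ≥ 1 and let D = (0, d_1, ..., d_c) be a degree sequence. If B_1(D) = 2, then L(D) = 1, so that B_0(D) = 1 and B_i(D) = π_i(D) for every i; in particular every π_i(D) is an integer and π_1(D) = 2. -/

import Mathlib

/-- The pure Betti ratio `π_i(D)` of a degree sequence `D = (d_0, …, d_c)`:
`π_i(D) = ∏_{j=1, j≠i}^{c} d_j / |d_j − d_i|` (so `π_0(D) = 1`). -/
noncomputable def piD {c : ℕ} (d : Fin (c + 1) → ℤ) (i : Fin (c + 1)) : ℚ :=
  ∏ j ∈ Finset.univ.filter (fun j : Fin (c + 1) => j ≠ i ∧ j ≠ 0),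
    ((d j : ℚ) / |(d j : ℚ) - (d i : ℚ)|)

/-- If `B_1(D) = 2` for a degree sequence `D`, then `L(D) = 1`, so `B_0(D) = 1` and
`B_i(D) = π_i(D)` for every `i`; in particular every `π_i(D)` is an integer and
`π_1(D) = 2`. -/
theorem L_eq_one_of_B_one_eq_two
    (c : ℕ) (hc : 1 ≤ c) (d : Fin (c + 1) → ℤ)
    (hmono : StrictMono d) (h0 : d 0 = 0)
    (L : ℕ)
    (hL : IsLeast {L' : ℕ | 0 < L' ∧ ∀ i : Fin (c + 1), ∃ n : ℤ,
      (L' : ℚ) * piD d i = n} L)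
    (hB1 : (L : ℚ) * piD d ⟨1, by omega⟩ = 2) :
    L = 1 ∧ (∀ i : Fin (c + 1), ∃ n : ℤ, piD d i = n) ∧
      piD d ⟨1, by omega⟩ = 2 := by
  have hLpos : 0 < L := hL.1.1
  have hd1 : 0 < d ⟨1, by omega⟩ := by
    have := hmono (show (0 : Fin (c + 1)) < ⟨1, by omega⟩ by
      simp [Fin.lt_def])
    omega
  have hL1 : L = 1 := by
    rcases Nat.lt_or_ge c 2 with hc2 | hc2
    · -- c = 1
      have hc1 : c = 1 := by omega
      subst hc1
      have hpi : ∀ i : Fin 2, piD d i = 1 := by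
        intro i
        have hd1' : (0 : ℚ) < (d 1 : ℚ) := by exact_mod_cast hd1
        fin_cases i
        · show piD d 0 = 1
          have hs : (Finset.univ.filter (fun j : Fin 2 => j ≠ 0 ∧ j ≠ 0)) = {1} := by
            decide
          simp only [piD, hs, Finset.prod_singleton, h0]
          rw [abs_of_pos (by push_cast [h0]; linarith)]
          push_cast [h0]
          field_simp
          rw [sub_zero, div_self (ne_of_gt hd1')]
        · show piD d 1 = 1
          have hs : (Finset.univ.filter (fun j : Fin 2 => j ≠ 1 ∧ j ≠ 0)) = ∅ := by
            decide
          simp [piD, hs]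
      have h1mem : (1 : ℕ) ∈ {L' : ℕ | 0 < L' ∧ ∀ i : Fin 2, ∃ n : ℤ,
          (L' : ℚ) * piD d i = n} := by
        exact ⟨one_pos, fun i => ⟨1, by simp [hpi]⟩⟩
      have := hL.2 h1mem
      omega
    · -- c ≥ 2 : π₁ > 1
      set i1 : Fin (c + 1) := ⟨1, by omega⟩ with hi1
      have hpi1 : 1 < piD d i1 := by
        rw [piD]
        have key : ∀ j ∈ Finset.univ.filter (fun j : Fin (c+1) => j ≠ i1 ∧ j ≠ 0),
            (1:ℚ) < (d j : ℚ) / |(d j : ℚ) - (d i1 : ℚ)| := by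
          intro j hj
          simp only [Finset.mem_filter, Finset.mem_univ, true_and] at hj
          have hjv : 1 < j.val := by
            rcases hj with ⟨hj1, hj0⟩
            have : j.val ≠ 1 := fun h => hj1 (Fin.ext h)
            have : j.val ≠ 0 := fun h => hj0 (Fin.ext h)
            omega
          have hdj : d i1 < d j := hmono (by simpa [Fin.lt_def, hi1] using hjv)
          have h1 : (0 : ℚ) < (d i1 : ℚ) := by exact_mod_cast hd1
          have h2 : (d i1 : ℚ) < (d j : ℚ) := by exact_mod_cast hdj
          rw [abs_of_pos (by linarith)]
          rw [one_lt_div (by linarith)]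
          linarith
        have hne : (Finset.univ.filter (fun j : Fin (c+1) => j ≠ i1 ∧ j ≠ 0)).Nonempty :=
          ⟨⟨2, by omega⟩, by
            simp only [Finset.mem_filter, Finset.mem_univ, true_and]
            constructor
            · intro h
              have := congrArg Fin.val h
              simp [hi1] at this
            · intro h
              have := congrArg Fin.val h
              simp at this⟩
        calc (1:ℚ) = ∏ _j ∈ Finset.univ.filter (fun j : Fin (c+1) => j ≠ i1 ∧ j ≠ 0),
            (1:ℚ) := by rw [Finset.prod_const_one]
        _ < _ := Finset.prod_lt_prod_of_nonempty (fun j _ => one_pos) key hne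
      have hLQ : (L : ℚ) < 2 := by
        calc (L : ℚ) = L * 1 := by ring
        _ < L * piD d i1 := by
          apply mul_lt_mul_of_pos_left hpi1
          exact_mod_cast hLpos
        _ = 2 := hB1
      have : L < 2 := by exact_mod_cast hLQ
      omega
  refine ⟨hL1, ?_, ?_⟩
  · intro i
    obtain ⟨n, hn⟩ := hL.1.2 i
    exact ⟨n, by rw [hL1] at hn; simpa using hn⟩
  · rw [hL1] at hB1; simpa using hB1
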